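/- Let Ψ_{ABCD} ∈ Sym⁴ be in type D normal form with scalar ψ ∈ ℂ and dyad (α_A, β_A), i.e. α_Q β^Q = 1 and Ψ_{ABCD} = −ψ α_{(A} α_B β_C β_{D)}. Then for every c ∈ ℂ the symmetric spinor κ_{AB} = c α_{(A} β_{B)} satisfies the algebraic compatibility condition Ψ_{(ABC}{}^F κ_{D)F} = 0. -/

import Mathlib

open scoped BigOperators

noncomputable section

/-- One-index spinors (lower index): elements of S = ℂ². -/
abbrev Spinor := Fin 2 → ℂ

/-- Two-index spinors. -/
abbrev Spinor2 := Fin 2 → Fin 2 → ℂ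

/-- Four-index spinors. -/
abbrev Spinor4 := Fin 2 → Fin 2 → Fin 2 → Fin 2 → ℂ

/-- The alternating spinor ε_{AB}, normalized by ε₀₁ = 1; the raised version
ε^{AB} has the same components. -/
def eps : Fin 2 → Fin 2 → ℂ := fun A B =>
  if A = 0 ∧ B = 1 then 1 else if A = 1 ∧ B = 0 then -1 else 0

/-- Index raising on one-index spinors: ξ^A = ε^{AB} ξ_B. -/
def up1 (ξ : Spinor) : Spinor := fun A => ∑ B, eps A B * ξ B

/-- The contraction α_Q β^Q. -/
def contr1 (α β : Spinor) : ℂ := ∑ Q, α Q * up1 β Q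

/-- Index raising on two-index spinors: ζ^{AB} = ε^{AA'} ε^{BB'} ζ_{A'B'}. -/
def up2 (ζ : Spinor2) : Spinor2 := fun A B => ∑ A', ∑ B', eps A A' * eps B B' * ζ A' B'

/-- The contraction ζ_{AB} η^{AB}. -/
def contr2 (ζ η : Spinor2) : ℂ := ∑ A, ∑ B, ζ A B * up2 η A B

/-- Index raising on four-index spinors. -/
def up4 (Ψ : Spinor4) : Spinor4 := fun A B C D =>
  ∑ A', ∑ B', ∑ C', ∑ D', eps A A' * eps B B' * eps C C' * eps D D' * Ψ A' B' C' D'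

/-- The symmetrized product α_{(A} β_{B)}. -/
def symPair (α β : Spinor) : Spinor2 := fun A B => (α A * β B + α B * β A) / 2

/-- Total symmetrization of a four-index object. -/
def sym4 (T : Spinor4) : Spinor4 := fun A B C D =>
  (∑ σ : Equiv.Perm (Fin 4),
    T (![A, B, C, D] (σ 0)) (![A, B, C, D] (σ 1)) (![A, B, C, D] (σ 2)) (![A, B, C, D] (σ 3))) / 24

/-- The symmetrized product α_{(A} α_B β_C β_{D)}. -/
def symAABB (α β : Spinor) : Spinor4 := sym4 (fun A B C D => α A * α B * β C * β D)

/-- Total symmetry of a four-index spinor (membership in Sym⁴). -/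
def TotallySymmetric4 (Ψ : Spinor4) : Prop :=
  ∀ A B C D, Ψ A B C D = Ψ B A C D ∧ Ψ A B C D = Ψ A C B D ∧ Ψ A B C D = Ψ A B D C

/-- The algebraic condition spinor Ψ_{(ABC}{}^F κ_{D)F}, where
Ψ_{ABC}{}^F = ε^{FE} Ψ_{ABCE}. -/
def algCond (Ψ : Spinor4) (κ : Spinor2) : Spinor4 :=
  sym4 (fun A B C D => ∑ F, (∑ E, eps F E * Ψ A B C E) * κ D F)


private lemma sum_perm4 (g : Fin 4 → Fin 4 → Fin 4 → Fin 4 → ℂ) :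
    ∑ σ : Equiv.Perm (Fin 4), g (σ 0) (σ 1) (σ 2) (σ 3) =
      g 0 1 2 3 + g 0 1 3 2 + g 0 2 1 3 + g 0 2 3 1 + g 0 3 1 2 + g 0 3 2 1 +
      g 1 0 2 3 + g 1 0 3 2 + g 1 2 0 3 + g 1 2 3 0 + g 1 3 0 2 + g 1 3 2 0 +
      g 2 0 1 3 + g 2 0 3 1 + g 2 1 0 3 + g 2 1 3 0 + g 2 3 0 1 + g 2 3 1 0 +
      g 3 0 1 2 + g 3 0 2 1 + g 3 1 0 2 + g 3 1 2 0 + g 3 2 0 1 + g 3 2 1 0 := by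
  rw [← (Equiv.Perm.decomposeFin (n := 3)).symm.sum_comp]
  simp only [Fintype.sum_prod_type,
    ← (Equiv.Perm.decomposeFin (n := 2)).symm.sum_comp,
    ← (Equiv.Perm.decomposeFin (n := 1)).symm.sum_comp,
    ← (Equiv.Perm.decomposeFin (n := 0)).symm.sum_comp,
    Fin.sum_univ_succ, Fin.sum_univ_zero]
  simp only [show (1 : Fin 4) = Fin.succ 0 from rfl, show (2 : Fin 4) = Fin.succ 1 from rfl,
    show (3 : Fin 4) = Fin.succ 2 from rfl,
    show (1 : Fin 3) = Fin.succ 0 from rfl, show (2 : Fin 3) = Fin.succ 1 from rfl,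
    show (1 : Fin 2) = Fin.succ 0 from rfl,
    Equiv.Perm.decomposeFin_symm_apply_zero, Equiv.Perm.decomposeFin_symm_apply_succ]
  simp (config := { decide := true }) [Equiv.swap_apply_def]
  ring

private lemma sym4_eq (T : Spinor4) (A B C D : Fin 2) :
    sym4 T A B C D =
      (T A B C D + T A B D C + T A C B D + T A C D B + T A D B C + T A D C B +
       T B A C D + T B A D C + T B C A D + T B C D A + T B D A C + T B D C A +
       T C A B D + T C A D B + T C B A D + T C B D A + T C D A B + T C D B A +
       T D A B C + T D A C B + T D B A C + T D B C A + T D C A B + T D C B A) / 24 := by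
  unfold sym4
  rw [sum_perm4 (fun i j k l => T (![A, B, C, D] i) (![A, B, C, D] j) (![A, B, C, D] k)
    (![A, B, C, D] l))]
  norm_num [Matrix.cons_val_zero, Matrix.cons_val_one, Matrix.head_cons]
  simp only [Matrix.cons_val_two, Matrix.cons_val_three, Matrix.tail_cons, Matrix.head_cons]

/-- for Ψ in type D normal form with scalar ψ and dyad (α, β),
every multiple κ_{AB} = c α_{(A} β_{B)} satisfies Ψ_{(ABC}{}^F κ_{D)F} = 0. -/
theorem typeD_candidate_algebraic_condition (α β : Spinor) (hdyad : contr1 α β = 1)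
    (ψ : ℂ) (Ψ : Spinor4)
    (hΨ : ∀ A B C D, Ψ A B C D = -ψ * symAABB α β A B C D)
    (c : ℂ) (κ : Spinor2) (hκ : ∀ A B, κ A B = c * symPair α β A B) :
    ∀ A B C D, algCond Ψ κ A B C D = 0 := by
  intro A B C D
  simp only [algCond]
  rw [sym4_eq]
  simp only [Fin.sum_univ_two, eps, hΨ, hκ, symAABB, symPair, sym4_eq]
  norm_num
  ring
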